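/- For any integer J ≥ 3, H(2, J−1) ≤ H(1, J) + 1. -/

import Mathlib

/-- A finite set of naturals is a Golomb ruler: all differences of
distinct pairs are distinct. -/
def IsGolomb (A : Finset ℕ) : Prop :=
  ∀ a ∈ A, ∀ b ∈ A, ∀ c ∈ A, ∀ d ∈ A,
    a ≠ b → c ≠ d → (a : ℤ) - b = (c : ℤ) - d → a = c ∧ b = d

/-- `F` is a family of `I` pairwise disjoint `J`-element Golomb rulers,
each contained in `{1, ..., n}`: an `(I,J,n)`-DGR. -/
def IsDGR (I J n : ℕ) (F : Fin I → Finset ℕ) : Prop :=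
  (∀ i, (F i).card = J) ∧ (∀ i, IsGolomb (F i)) ∧
  (∀ i, F i ⊆ Finset.Icc 1 n) ∧
  (∀ i j, i ≠ j → Disjoint (F i) (F j))

/-- `H I J` is the least positive `n` such that an `(I,J,n)`-DGR exists. -/
noncomputable def H (I J : ℕ) : ℕ :=
  sInf {n | 0 < n ∧ ∃ F : Fin I → Finset ℕ, IsDGR I J n F}

/-- `A` contains `I` pairwise disjoint `J`-element Golomb rulers. -/
def HasDGRin (I J : ℕ) (A : Finset ℕ) : Prop :=
  ∃ F : Fin I → Finset ℕ,
    (∀ i, (F i).card = J) ∧ (∀ i, IsGolomb (F i)) ∧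
    (∀ i, F i ⊆ A) ∧ (∀ i j, i ≠ j → Disjoint (F i) (F j))

/-- The defining set for `Y I J`. -/
def YSet (I J : ℕ) : Set ℕ :=
  {n | 0 < n ∧ ∀ A : Finset ℕ, (∀ a ∈ A, 0 < a) → A.card = n → HasDGRin I J A}

/-- `Y I J` is the least positive `n` such that every set of `n`
positive integers contains `I` disjoint `J`-element Golomb rulers. -/
noncomputable def Y (I J : ℕ) : ℕ := sInf (YSet I J)

lemma golomb_subset {A B : Finset ℕ} (h : IsGolomb A) (hBA : B ⊆ A) : IsGolomb B :=
  fun a ha b hb c hc d hd hab hcd he => h a (hBA ha) b (hBA hb) c (hBA hc) d (hBA hd) hab hcd he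

lemma golomb_shift {A : Finset ℕ} (h : IsGolomb A) : IsGolomb (A.image (· + 1)) := by
  intro a ha b hb c hc d hd hab hcd he
  simp only [Finset.mem_image] at ha hb hc hd
  obtain ⟨a', ha', rfl⟩ := ha
  obtain ⟨b', hb', rfl⟩ := hb
  obtain ⟨c', hc', rfl⟩ := hc
  obtain ⟨d', hd', rfl⟩ := hd
  have he' : (a' : ℤ) - b' = (c' : ℤ) - d' := by push_cast at he ⊢; linarith
  have := h a' ha' b' hb' c' hc' d' hd' (by omega) (by omega) he'
  omega

lemma pow3_aux {a b c d : ℕ} (hba : b < a) (hdc : d < c) (hca : c < a)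
    (he : (3:ℤ)^a - 3^b = 3^c - 3^d) : False := by
  have h1 : (3:ℤ)^b ≤ 3^(a-1) := pow_le_pow_right₀ (by norm_num) (by omega)
  have h2 : (3:ℤ)^c ≤ 3^(a-1) := pow_le_pow_right₀ (by norm_num) (by omega)
  have h3 : (3:ℤ)^a = 3 * 3^(a-1) := by rw [← pow_succ']; congr 1; omega
  have h4 : (0:ℤ) < 3^d := by positivity
  have h5 : (0:ℤ) < 3^(a-1) := by positivity
  linarith

lemma pow3_mono {x y : ℕ} : (3:ℤ)^x < 3^y ↔ x < y := pow_lt_pow_iff_right₀ (by norm_num)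

lemma pow3_eq {a b c d : ℕ} (hba : b < a) (hdc : d < c)
    (he : (3:ℤ)^a - 3^b = 3^c - 3^d) : a = c ∧ b = d := by
  have hac : a = c := by
    rcases lt_trichotomy a c with h | h | h
    · exact absurd (pow3_aux hdc hba h he.symm) id
    · exact h
    · exact absurd (pow3_aux hba hdc h he) id
  subst hac
  have hbd : (3:ℤ)^b = 3^d := by linarith
  have : b = d := by
    by_contra h
    rcases lt_or_gt_of_ne h with h' | h'
    · have h2 := pow3_mono.2 h'
      rw [hbd] at h2; exact lt_irrefl _ h2
    · have h2 := pow3_mono.2 h'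
      rw [hbd] at h2; exact lt_irrefl _ h2
  exact ⟨rfl, this⟩

lemma golomb_pow3 (J : ℕ) : IsGolomb ((Finset.range J).image (3 ^ ·)) := by
  intro a ha b hb c hc d hd hab hcd he
  simp only [Finset.mem_image, Finset.mem_range] at ha hb hc hd
  obtain ⟨i, _, rfl⟩ := ha
  obtain ⟨j, _, rfl⟩ := hb
  obtain ⟨k, _, rfl⟩ := hc
  obtain ⟨l, _, rfl⟩ := hd
  have hij : i ≠ j := fun h => hab (by rw [h])
  have hkl : k ≠ l := fun h => hcd (by rw [h])
  have he' : (3:ℤ)^i - 3^j = 3^k - 3^l := by push_cast at he; exact_mod_cast he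
  rcases lt_or_gt_of_ne hij with h | h
  · have hkl' : k < l := by
      have h1 : (3:ℤ)^i < 3^j := pow3_mono.2 h
      have h2 : (3:ℤ)^k < 3^l := by linarith
      exact pow3_mono.1 h2
    have := pow3_eq h hkl' (by linarith)
    exact ⟨by rw [this.2], by rw [this.1]⟩
  · have hkl' : l < k := by
      have h1 : (3:ℤ)^j < 3^i := pow3_mono.2 h
      have h2 : (3:ℤ)^l < 3^k := by linarith
      exact pow3_mono.1 h2
    have := pow3_eq h hkl' he'
    exact ⟨by rw [this.1], by rw [this.2]⟩

theorem H_two_Jsub1 (J : ℕ) (hJ : 3 ≤ J) : H 2 (J - 1) ≤ H 1 J + 1 := by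
  have hinj3 : Function.Injective (fun i : ℕ => 3 ^ i) :=
    Nat.pow_right_injective (by norm_num)
  have hne : {n | 0 < n ∧ ∃ F : Fin 1 → Finset ℕ, IsDGR 1 J n F}.Nonempty := by
    refine ⟨3 ^ (J - 1), by positivity,
      fun _ => (Finset.range J).image (3 ^ ·), ?_, ?_, ?_, ?_⟩
    · intro i
      rw [Finset.card_image_of_injective _ hinj3, Finset.card_range]
    · intro i; exact golomb_pow3 J
    · intro i x hx
      simp only [Finset.mem_image, Finset.mem_range] at hx
      obtain ⟨k, hk, rfl⟩ := hx
      simp only [Finset.mem_Icc]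
      exact ⟨Nat.one_le_pow _ _ (by norm_num),
        Nat.pow_le_pow_right (by norm_num) (by omega)⟩
    · intro i j hij; exact absurd (Subsingleton.elim i j) hij
  have hmem : H 1 J ∈ {n | 0 < n ∧ ∃ F : Fin 1 → Finset ℕ, IsDGR 1 J n F} :=
    Nat.sInf_mem hne
  obtain ⟨hpos, F, hcard, hgol, hsub, -⟩ := hmem
  set A := F 0 with hAdef
  set B := A.image (· + 1) with hBdef
  have hA1 : A ⊆ Finset.Icc 1 (H 1 J) := hsub 0
  have hAcard : A.card = J := hcard 0
  have hAg : IsGolomb A := hgol 0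
  have hBg : IsGolomb B := golomb_shift hAg
  have hBcard : B.card = J := by
    rw [hBdef, Finset.card_image_of_injective _ (add_left_injective 1), hAcard]
  have hBsub : B ⊆ Finset.Icc 1 (H 1 J + 1) := by
    intro x hx
    rw [hBdef] at hx
    simp only [Finset.mem_image] at hx
    obtain ⟨a, ha, rfl⟩ := hx
    have := hA1 ha
    simp only [Finset.mem_Icc] at this ⊢
    omega
  have hA1' : A ⊆ Finset.Icc 1 (H 1 J + 1) := by
    intro x hx
    have := hA1 hx
    simp only [Finset.mem_Icc] at this ⊢
    omega
  have key : ∀ x ∈ A, x ∈ B → ∀ y ∈ A, y ∈ B → x = y := by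
    intro x hxA hxB y hyA hyB
    rw [hBdef] at hxB hyB
    simp only [Finset.mem_image] at hxB hyB
    obtain ⟨a, haA, rfl⟩ := hxB
    obtain ⟨b, hbA, rfl⟩ := hyB
    have := hAg (a + 1) hxA a haA (b + 1) hyA b hbA
      (by show a + 1 ≠ a; omega) (by show b + 1 ≠ b; omega)
      (by show ((a:ℤ)+1) - a = ((b:ℤ)+1) - b; ring)
    show a + 1 = b + 1
    omega
  have hAne : A.Nonempty := Finset.card_pos.1 (by omega)
  have hBne : B.Nonempty := Finset.card_pos.1 (by omega)
  obtain ⟨t, s, htA, hsB, hdisj⟩ :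
      ∃ t s, t ∈ A ∧ s ∈ B ∧ Disjoint (A.erase t) (B.erase s) := by
    by_cases h : ∃ t, t ∈ A ∧ t ∈ B
    · obtain ⟨t, htA, htB⟩ := h
      refine ⟨t, t, htA, htB, ?_⟩
      rw [Finset.disjoint_left]
      intro x hx hx'
      exact (Finset.ne_of_mem_erase hx)
        (key x (Finset.mem_of_mem_erase hx) (Finset.mem_of_mem_erase hx') t htA htB)
    · push_neg at h
      refine ⟨A.min' hAne, B.min' hBne, A.min'_mem hAne, B.min'_mem hBne, ?_⟩
      rw [Finset.disjoint_left]
      intro x hx hx'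
      exact h x (Finset.mem_of_mem_erase hx) (Finset.mem_of_mem_erase hx')
  have hmem2 : H 1 J + 1 ∈ {n | 0 < n ∧ ∃ F : Fin 2 → Finset ℕ, IsDGR 2 (J - 1) n F} := by
    refine ⟨by omega, ![A.erase t, B.erase s], ?_, ?_, ?_, ?_⟩
    · intro i
      fin_cases i
      · show (A.erase t).card = J - 1
        rw [Finset.card_erase_of_mem htA, hAcard]
      · show (B.erase s).card = J - 1
        rw [Finset.card_erase_of_mem hsB, hBcard]
    · intro i
      fin_cases i
      · exact golomb_subset hAg (Finset.erase_subset _ _)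
      · exact golomb_subset hBg (Finset.erase_subset _ _)
    · intro i
      fin_cases i
      · exact fun x hx => hA1' (Finset.mem_of_mem_erase hx)
      · exact fun x hx => hBsub (Finset.mem_of_mem_erase hx)
    · intro i j hij
      fin_cases i <;> fin_cases j <;>
        first
          | exact absurd rfl hij
          | exact hdisj
          | exact hdisj.symm
  exact Nat.sInf_le hmem2
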